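/- Let (F, E, L) be a σ-admissible triple with E a field. If M is a finite-dimensional φ-module over E that is L-trivial, then M is étale: the linearization φ_σ : E ⊗_{σ,E} M → M is bijective. Equivalently, if φm = Φm for an E-basis m, then det Φ ≠ 0. -/

import Mathlib

open scoped TensorProduct

/-!
STATEMENT 6: Let (F, E, L) be a σ-admissible triple with E a field.  If M is a
finite-dimensional φ-module over E that is L-trivial, then M is étale: the linearization
φ_σ : E ⊗_{σ,E} M → M is bijective; equivalently, if φm = Φm for an E-basis m, then
det Φ ≠ 0.
-/

theorem stmt6
    -- the σ-admissible triple (F, E, L)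
    (d : ℕ) [NeZero d] (Ll : ZMod d → Type) [∀ l, Field (Ll l)]
    (E : Type) [Field E] [∀ l, Algebra E (Ll l)]
    (σL : (∀ l, Ll l) →+* (∀ l, Ll l)) (hσLinj : Function.Injective σL)
    (σE : E →+* E)
    (hσcomp : ∀ e : E, σL (algebraMap E (∀ l, Ll l) e) = algebraMap E (∀ l, Ll l) (σE e))
    (hshift : ∀ (x : ∀ l, Ll l) (l : ZMod d), (∀ k, k ≠ l → x k = 0) →
        ∀ m, m ≠ l + 1 → σL x m = 0)
    (F : Type) [Field F] [Algebra F E]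
    [Algebra F (∀ l, Ll l)] [IsScalarTower F E (∀ l, Ll l)]
    [SMulCommClass E F (∀ l, Ll l)]
    (hEfix : ∀ e : E, σE e = e ↔ ∃ f : F, algebraMap F E f = e)
    (hLfix : ∀ x : ∀ l, Ll l, σL x = x ↔
        ∃ f : F, algebraMap E (∀ l, Ll l) (algebraMap F E f) = x)
    [∀ l, Algebra.IsSeparable E (Ll l)]
    -- a finite-dimensional φ-module M over E with basis and matrix Φ
    (M : Type) [AddCommGroup M] [Module E M]
    (φ : M →+ M) (hφ : ∀ (e : E) (x : M), φ (e • x) = σE e • φ x)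
    (r : ℕ) (b : Module.Basis (Fin r) E M)
    (Φ : Matrix (Fin r) (Fin r) E)
    (hΦ : ∀ i, φ (b i) = ∑ j, Φ i j • b j)
    (φT : (∀ l, Ll l) ⊗[E] M →+ (∀ l, Ll l) ⊗[E] M)
    (hφT : ∀ (x : ∀ l, Ll l) (y : M), φT (x ⊗ₜ[E] y) = σL x ⊗ₜ[E] φ y)
    (VM : Submodule F ((∀ l, Ll l) ⊗[E] M))
    (hVM : ∀ v, v ∈ VM ↔ φT v = v)
    (ιM : ((∀ l, Ll l) ⊗[F] VM) →ₗ[F] ((∀ l, Ll l) ⊗[E] M))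
    (hιM : ∀ (x : ∀ l, Ll l) (v : VM), ιM (x ⊗ₜ[F] v) = x • (v : (∀ l, Ll l) ⊗[E] M))
    -- M is L-trivial
    (htriv : Function.Bijective ιM) :
    Φ.det ≠ 0 := by
  set L := ∀ l, Ll l with hL
  intro hdet
  -- a nonzero right kernel vector of Φ
  obtain ⟨c, hc0, hmul⟩ : ∃ c, c ≠ 0 ∧ Φ.mulVec c = 0 := by
    obtain ⟨c, hc, h0⟩ := Matrix.exists_mulVec_eq_zero_iff.mpr hdet
    exact ⟨c, hc, h0⟩
  -- the linear functional f on L ⊗[E] M given by c in the base-changed basis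
  let bL : Module.Basis (Fin r) L (L ⊗[E] M) := b.baseChange L
  let f : (L ⊗[E] M) →ₗ[L] L := ∑ j, algebraMap E L (c j) • bL.coord j
  have hf_tmul : ∀ (x : L) (m : M),
      f (x ⊗ₜ[E] m) = ∑ j, algebraMap E L ((b.repr m) j * c j) * x := by
    intro x m
    simp only [f, LinearMap.sum_apply, LinearMap.smul_apply, Module.Basis.coord_apply, bL,
      Module.Basis.baseChange_repr_tmul, map_mul]
    refine Finset.sum_congr rfl fun j _ => ?_
    rw [smul_eq_mul, Algebra.smul_def]
    ring
  -- f vanishes on the image of φT, on pure tensors with second leg φ (b i)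
  have hf_phi_basis : ∀ (z : L) (i : Fin r), f (z ⊗ₜ[E] φ (b i)) = 0 := by
    intro z i
    rw [hΦ i]
    have : z ⊗ₜ[E] (∑ j, Φ i j • b j) = ∑ j, (algebraMap E L (Φ i j) * z) ⊗ₜ[E] b j := by
      rw [TensorProduct.tmul_sum]
      refine Finset.sum_congr rfl fun j _ => ?_
      rw [TensorProduct.tmul_smul, TensorProduct.smul_tmul', Algebra.smul_def]
    rw [this, map_sum]
    have h2 : ∀ j, f ((algebraMap E L (Φ i j) * z) ⊗ₜ[E] b j)
        = algebraMap E L (Φ i j * c j) * z := by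
      intro j
      rw [hf_tmul]
      rw [Finset.sum_eq_single j]
      · simp only [Module.Basis.repr_self, Finsupp.single_eq_same, one_mul, map_mul]; ring
      · intro k _ hk; simp [Finsupp.single_apply, Ne.symm hk]
      · simp
    have h0 : Φ.mulVec c i = 0 := by rw [hmul]; rfl
    calc ∑ j, f ((algebraMap E L (Φ i j) * z) ⊗ₜ[E] b j)
        = ∑ j, algebraMap E L (Φ i j * c j) * z :=
          Finset.sum_congr rfl fun j _ => h2 j
      _ = algebraMap E L (∑ j, Φ i j * c j) * z := by rw [map_sum, Finset.sum_mul]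
      _ = 0 := by
          have h3 : (∑ j, Φ i j * c j) = Φ.mulVec c i := by
            simp [Matrix.mulVec, dotProduct]
          rw [h3, h0, map_zero, zero_mul]
  -- f vanishes on z ⊗ φ m for all m
  have hf_phi : ∀ (z : L) (m : M), f (z ⊗ₜ[E] φ m) = 0 := by
    intro z m
    have key : z ⊗ₜ[E] φ m
        = ∑ i, (algebraMap E L (σE ((b.repr m) i)) * z) ⊗ₜ[E] φ (b i) := by
      conv_lhs => rw [← b.sum_repr m]
      rw [map_sum, TensorProduct.tmul_sum]
      refine Finset.sum_congr rfl fun i _ => ?_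
      rw [hφ, TensorProduct.tmul_smul, TensorProduct.smul_tmul', Algebra.smul_def]
    rw [key, map_sum]
    exact Finset.sum_eq_zero fun i _ => hf_phi_basis _ i
  -- f vanishes on φT of everything
  have hf_phiT : ∀ w : L ⊗[E] M, f (φT w) = 0 := by
    intro w
    induction w using TensorProduct.induction_on with
    | zero => simp
    | tmul x m => rw [hφT]; exact hf_phi _ _
    | add u v hu hv => rw [map_add, map_add, hu, hv, add_zero]
  -- f vanishes on VM
  have hf_VM : ∀ v : VM, f (v : L ⊗[E] M) = 0 := by
    intro v
    have := (hVM (v : L ⊗[E] M)).mp v.2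
    rw [← this]; exact hf_phiT _
  -- f vanishes everywhere (by surjectivity of ιM)
  have hf_zero : ∀ w : L ⊗[E] M, f w = 0 := by
    intro w
    obtain ⟨u, rfl⟩ := htriv.2 w
    induction u using TensorProduct.induction_on with
    | zero => simp
    | tmul x v => rw [hιM, map_smul, hf_VM, smul_zero]
    | add u v hu hv => rw [map_add, map_add, hu, hv, add_zero]
  -- but f (1 ⊗ b j) = algebraMap E L (c j) ≠ 0 for some j
  obtain ⟨j, hj⟩ : ∃ j, c j ≠ 0 := by
    by_contra h; push_neg at h; exact hc0 (funext h)
  have := hf_zero ((1 : L) ⊗ₜ[E] b j)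
  rw [hf_tmul] at this
  rw [Finset.sum_eq_single j] at this
  · simp only [mul_one] at this
    have hinj : Function.Injective (algebraMap E L) := RingHom.injective _
    apply hj
    have : algebraMap E L ((b.repr (b j)) j * c j) = algebraMap E L 0 := by simpa using this
    have h2 := hinj this
    simpa using h2
  · intro k _ hk; simp [Finsupp.single_apply, Ne.symm hk]
  · simp
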